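/- Let 2 ≤ m < n, 0 < b < m, 0 < a < n be integers with gcd(m,b) = 1, gcd(n,a) = 1, δ := ma + nb − mn ≥ 2, and m² + n² − δmn > 0. Define ζ₁ = 0, ζ₂ = 1, ζ_{i+1} = δζ_i − ζ_{i−1} for i ≥ 2. Then for every i ≥ 1, both ζ_{i+1}n − ζ_im and ζ_{i+1}a − ζ_i(m−b) are positive integers. -/

import Mathlib

lemma mori_aux (δ : ℤ) (hδ : 2 ≤ δ) (w : ℕ → ℤ)
    (hw : ∀ i, 1 ≤ i → w (i + 2) = δ * w (i + 1) - w i)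
    (h1 : 0 < w 1) (h2 : w 1 < w 2) :
    ∀ i, 1 ≤ i → 0 < w i ∧ w i < w (i + 1) := by
  intro i hi
  induction i with
  | zero => omega
  | succ k ih =>
    rcases Nat.eq_or_lt_of_le hi with h | h
    · simp only [← h]
      exact ⟨h1, h2⟩
    · have hk : 1 ≤ k := by omega
      obtain ⟨hp, hlt⟩ := ih hk
      refine ⟨lt_trans hp hlt, ?_⟩
      rw [hw k hk]
      nlinarith [mul_nonneg (by linarith : (0:ℤ) ≤ δ - 2) (by linarith : (0:ℤ) ≤ w (k+1))]

/-- Mori's sequence `ζ₁ = 0`, `ζ₂ = 1`, `ζ_{i+1} = δζ_i - ζ_{i-1}`,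
for a k2A extremal neighborhood with data `(m,b)`, `(n,a)`, `δ = ma + nb - mn ≥ 2`
and `Δ = m² + n² - δmn > 0`: for every `i ≥ 1`, both `ζ_{i+1}n - ζ_im` and
`ζ_{i+1}a - ζ_i(m-b)` are positive. -/
theorem mori_sequence_positive (m n a b δ : ℤ) (ζ : ℕ → ℤ)
    (hm : 2 ≤ m) (hmn : m < n)
    (hb : 0 < b) (hbm : b < m) (ha : 0 < a) (han : a < n)
    (hgcdm : Int.gcd m b = 1) (hgcdn : Int.gcd n a = 1)
    (hδdef : δ = m * a + n * b - m * n) (hδ : 2 ≤ δ)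
    (hΔ : 0 < m ^ 2 + n ^ 2 - δ * m * n)
    (hζ1 : ζ 1 = 0) (hζ2 : ζ 2 = 1)
    (hζ : ∀ i, 2 ≤ i → ζ (i + 1) = δ * ζ i - ζ (i - 1)) :
    ∀ i, 1 ≤ i → 0 < ζ (i + 1) * n - ζ i * m ∧ 0 < ζ (i + 1) * a - ζ i * (m - b) := by
  have hζ3 : ζ 3 = δ := by
    have := hζ 2 (le_refl 2)
    simp [hζ1, hζ2] at this
    linarith
  have hrec : ∀ i, 1 ≤ i → ζ (i + 3) = δ * ζ (i + 2) - ζ (i + 1) := by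
    intro i hi
    have := hζ (i + 2) (by omega)
    simpa using this
  -- u sequence
  have hu := mori_aux δ hδ (fun i => ζ (i + 1) * n - ζ i * m) ?_ ?_ ?_
  have hv := mori_aux δ hδ (fun i => ζ (i + 1) * a - ζ i * (m - b)) ?_ ?_ ?_
  · intro i hi
    exact ⟨(hu i hi).1, (hv i hi).1⟩
  · intro i hi
    rw [hrec i hi]
    have h2 : ζ (i + 2) = δ * ζ (i + 1) - ζ i := by
      have := hζ (i + 1) (by omega)
      simpa using this
    rw [h2]; ring
  · simp [hζ1, hζ2]; linarith
  · simp only [hζ1, hζ2, hζ3]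
    nlinarith [mul_nonneg (by linarith : (0:ℤ) ≤ δ - 2) (by linarith : (0:ℤ) ≤ n)]
  · intro i hi
    rw [hrec i hi]
    have h2 : ζ (i + 2) = δ * ζ (i + 1) - ζ i := by
      have := hζ (i + 1) (by omega)
      simpa using this
    rw [h2]; ring
  · simp [hζ1, hζ2]; linarith
  · simp only [hζ1, hζ2, hζ3]
    -- goal: 1 * a - 0 * (m-b) < δ * a - 1 * (m - b)
    have hn : (0:ℤ) < n := by linarith
    nlinarith [mul_nonneg (by linarith : (0:ℤ) ≤ δ - 2) (mul_pos ha hn).le,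
      mul_pos ha (by linarith : (0:ℤ) < n - m)]
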